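/- arXiv:1506.07249 — 2 statements merged into one kernel-verified Lean document; each statement's English description precedes it below -/
import Mathlib

section
/- If a p-minimal k-partition D of Ω is a spectral equipartition (all λ₁(D_i) are equal), then D is q-minimal for every q ∈ [p, +∞]. -/
open scoped ENNReal
open Filter MeasureTheory Metric Real Set

noncomputable section

/-- The Laplacian of a function on Euclidean space (sum of second partials). -/
def lap {d : ℕ} (u : EuclideanSpace ℝ (Fin d) → ℝ) (x : EuclideanSpace ℝ (Fin d)) : ℝ :=
  ∑ i : Fin d, fderiv ℝ (fun y => fderiv ℝ u y (EuclideanSpace.single i 1)) x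
    (EuclideanSpace.single i 1)

/-- `u` is a (classical) Dirichlet eigenfunction on `Ω` with eigenvalue `μ`:
it is `C²` in `Ω`, continuous up to the closure, vanishes on the boundary,
satisfies `-Δu = μ u` in `Ω`, and is not identically zero on `Ω`. -/
def IsDirichletEigenfun {d : ℕ} (Ω : Set (EuclideanSpace ℝ (Fin d))) (μ : ℝ)
    (u : EuclideanSpace ℝ (Fin d) → ℝ) : Prop :=
  ContDiffOn ℝ 2 u Ω ∧ ContinuousOn u (closure Ω) ∧
    (∀ x ∈ frontier Ω, u x = 0) ∧ (∀ x ∈ Ω, lap u x + μ * u x = 0) ∧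
    ¬ (∀ x ∈ Ω, u x = 0)

/-- `μ` is a Dirichlet eigenvalue of (the Laplacian on) `Ω`. -/
def IsDirichletEigenvalue {d : ℕ} (Ω : Set (EuclideanSpace ℝ (Fin d))) (μ : ℝ) : Prop :=
  ∃ u, IsDirichletEigenfun Ω μ u

/-- The eigenspace (including `0`) attached to `μ`. -/
def eigSpace {d : ℕ} (Ω : Set (EuclideanSpace ℝ (Fin d))) (μ : ℝ) :
    Set (EuclideanSpace ℝ (Fin d) → ℝ) :=
  {u | ContDiffOn ℝ 2 u Ω ∧ ContinuousOn u (closure Ω) ∧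
    (∀ x ∈ frontier Ω, u x = 0) ∧ (∀ x ∈ Ω, lap u x + μ * u x = 0)}

/-- The multiplicity of `μ` as Dirichlet eigenvalue of `Ω`. -/
def mult {d : ℕ} (Ω : Set (EuclideanSpace ℝ (Fin d))) (μ : ℝ) : ℕ :=
  Module.finrank ℝ (Submodule.span ℝ (eigSpace Ω μ))

/-- The eigenvalue counting function `N(t, Ω)`: number of Dirichlet eigenvalues
of `Ω` strictly below `t`, counted with multiplicity. -/
def countBelow {d : ℕ} (Ω : Set (EuclideanSpace ℝ (Fin d))) (t : ℝ) : ℝ≥0∞ :=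
  ∑' μ : {μ : ℝ // IsDirichletEigenvalue Ω μ ∧ μ < t}, (mult Ω μ.1 : ℝ≥0∞)

/-- The `k`-th Dirichlet eigenvalue of `Ω` (`1`-indexed, counted with multiplicity),
as an extended nonnegative real; it is `∞` when there are fewer than `k` eigenvalues
(in particular `λ₁(∅) = ∞`). -/
def dirichletEigenvalueE {d : ℕ} (Ω : Set (EuclideanSpace ℝ (Fin d))) (k : ℕ) : ℝ≥0∞ :=
  ⨅ (t : ℝ) (_ : (k : ℝ≥0∞) ≤ countBelow Ω t), ENNReal.ofReal t

/-- The first Dirichlet eigenvalue `λ₁(Ω)`. -/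
def lam1 {d : ℕ} (Ω : Set (EuclideanSpace ℝ (Fin d))) : ℝ≥0∞ :=
  dirichletEigenvalueE Ω 1

/-- The nodal set `N(u)`: the closure in `Ω` of the zero set of `u`. -/
def nodalSet {d : ℕ} (Ω : Set (EuclideanSpace ℝ (Fin d)))
    (u : EuclideanSpace ℝ (Fin d) → ℝ) : Set (EuclideanSpace ℝ (Fin d)) :=
  closure {x ∈ Ω | u x = 0} ∩ Ω

/-- The set of nodal domains of `u`: connected components of `Ω \ N(u)`. -/
def nodalDomains {d : ℕ} (Ω : Set (EuclideanSpace ℝ (Fin d)))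
    (u : EuclideanSpace ℝ (Fin d) → ℝ) : Set (Set (EuclideanSpace ℝ (Fin d))) :=
  {D | ∃ x ∈ Ω \ nodalSet Ω u, D = connectedComponentIn (Ω \ nodalSet Ω u) x}

/-- `ev` enumerates the Dirichlet eigenvalues of `Ω` in nondecreasing order,
counted with multiplicity. -/
def IsSpectralEnum {d : ℕ} (Ω : Set (EuclideanSpace ℝ (Fin d))) (ev : ℕ → ℝ) : Prop :=
  Monotone ev ∧ (∀ n, IsDirichletEigenvalue Ω (ev n)) ∧
  (∀ μ, IsDirichletEigenvalue Ω μ →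
    {n | ev n = μ}.Finite ∧ {n | ev n = μ}.ncard = mult Ω μ)

/-- A `k`-partition of `Ω`: `k` pairwise disjoint nonempty open connected subsets. -/
def IsKPartition {d : ℕ} (Ω : Set (EuclideanSpace ℝ (Fin d))) {k : ℕ}
    (D : Fin k → Set (EuclideanSpace ℝ (Fin d))) : Prop :=
  (∀ i, IsOpen (D i)) ∧ (∀ i, IsConnected (D i)) ∧ (∀ i, D i ⊆ Ω) ∧
    Pairwise (Function.onFun Disjoint D)

/-- The minimal `k`-partition energy `𝔏_k(Ω)`. -/
def LLk {d : ℕ} (Ω : Set (EuclideanSpace ℝ (Fin d))) (k : ℕ) : ℝ≥0∞ :=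
  ⨅ (D : Fin k → Set (EuclideanSpace ℝ (Fin d))) (_ : IsKPartition Ω D), ⨆ i, lam1 (D i)

/-- The rectangle `R(a,b) = (0, aπ) × (0, bπ)` as a subset of `ℝ²`. -/
def rect (a b : ℝ) : Set (EuclideanSpace ℝ (Fin 2)) :=
  {x | x 0 ∈ Set.Ioo 0 (a * Real.pi) ∧ x 1 ∈ Set.Ioo 0 (b * Real.pi)}

/-- The Bessel function of the first kind of integer order `ℓ`. -/
def besselJ (ℓ : ℕ) (x : ℝ) : ℝ :=
  (1 / Real.pi) * ∫ τ in (0:ℝ)..Real.pi, Real.cos (ℓ * τ - x * Real.sin τ)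

/-- The first Dirichlet eigenvalue, as a real number. -/
noncomputable def lam1r {d : ℕ} (Ω : Set (EuclideanSpace ℝ (Fin d))) : ℝ :=
  sInf {μ | IsDirichletEigenvalue Ω μ}

/-- The `p`-energy `Λ_p(D) = ((1/k) Σ_i λ₁(D_i)^p)^{1/p}` of a `k`-partition. -/
noncomputable def energyP {d k : ℕ} (D : Fin k → Set (EuclideanSpace ℝ (Fin d)))
    (p : ℝ) : ℝ :=
  ((1 / (k : ℝ)) * ∑ i, lam1r (D i) ^ p) ^ (1 / p)

/-- The `∞`-energy `Λ(D) = max_i λ₁(D_i)` of a `k`-partition. -/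
noncomputable def energyInf {d k : ℕ}
    (D : Fin k → Set (EuclideanSpace ℝ (Fin d))) : ℝ :=
  ⨆ i, lam1r (D i)

/-- The minimal `p`-energy `𝔏_{k,p}(Ω)`. -/
noncomputable def LLkpR {d : ℕ} (Ω : Set (EuclideanSpace ℝ (Fin d))) (k : ℕ)
    (p : ℝ) : ℝ :=
  sInf {e | ∃ D : Fin k → Set (EuclideanSpace ℝ (Fin d)),
    IsKPartition Ω D ∧ e = energyP D p}

/-- The minimal energy `𝔏_k(Ω)` (real-valued version). -/
noncomputable def LLkR {d : ℕ} (Ω : Set (EuclideanSpace ℝ (Fin d))) (k : ℕ) : ℝ :=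
  sInf {e | ∃ D : Fin k → Set (EuclideanSpace ℝ (Fin d)),
    IsKPartition Ω D ∧ e = energyInf D}

/-- Second derivative test at an interior local maximum (one variable). -/
private lemma second_deriv_nonpos {φ ψ : ℝ → ℝ} {T : ℝ}
    (hmax : IsLocalMax φ 0)
    (hφψ : ∀ᶠ t in nhds (0:ℝ), HasDerivAt φ (ψ t) t)
    (hψ : HasDerivAt ψ T 0) : T ≤ 0 := by
  by_contra hT
  push_neg at hT
  have hψ0 : ψ 0 = 0 := by
    have h0 := hφψ.self_of_nhds
    have h1 := hmax.deriv_eq_zero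
    rw [h0.deriv] at h1
    exact h1
  -- ψ is eventually positive on the right of 0
  have hslope : Filter.Tendsto (slope ψ 0) (nhdsWithin 0 {(0:ℝ)}ᶜ) (nhds T) :=
    hasDerivAt_iff_tendsto_slope.mp hψ
  have hpos' : ∀ᶠ t in nhdsWithin (0:ℝ) {(0:ℝ)}ᶜ, 0 < slope ψ 0 t :=
    hslope.eventually (eventually_gt_nhds hT)
  have hpos : ∀ᶠ t in nhdsWithin (0:ℝ) (Set.Ioi 0), 0 < ψ t := by
    have h2 : ∀ᶠ t in nhdsWithin (0:ℝ) (Set.Ioi 0), 0 < slope ψ 0 t :=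
      nhdsWithin_mono 0 (fun t (ht : t ∈ Set.Ioi 0) => ne_of_gt ht) hpos'
    filter_upwards [h2, self_mem_nhdsWithin] with t ht ht'
    have : slope ψ 0 t = ψ t / t := by
      simp [slope_def_field, hψ0]
    rw [this] at ht
    have htpos : (0:ℝ) < t := ht'
    have := mul_pos ht htpos
    rwa [div_mul_cancel₀] at this
    exact ne_of_gt htpos
  obtain ⟨δ, hδmem, hδ⟩ := mem_nhdsGT_iff_exists_Ioo_subset.mp hpos
  have hδpos : (0:ℝ) < δ := hδmem
  obtain ⟨ε₁, hε₁, hball₁⟩ := Metric.eventually_nhds_iff.mp hφψ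
  obtain ⟨ε₂, hε₂, hball₂⟩ := Metric.eventually_nhds_iff.mp (hmax : ∀ᶠ t in nhds (0:ℝ), φ t ≤ φ 0)
  set b := min (min (ε₁ / 2) (ε₂ / 2)) (δ / 2) with hb
  have hbpos : 0 < b := by positivity
  have hbε₁ : b < ε₁ := lt_of_le_of_lt (le_trans (min_le_left _ _) (min_le_left _ _)) (by linarith)
  have hbε₂ : b < ε₂ := lt_of_le_of_lt (le_trans (min_le_left _ _) (min_le_right _ _)) (by linarith)
  have hbδ : b < δ := lt_of_le_of_lt (min_le_right _ _) (by linarith)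
  have hmem : ∀ t ∈ Set.Icc (0:ℝ) b, HasDerivAt φ (ψ t) t := by
    intro t ht
    apply hball₁
    rw [Real.dist_eq, sub_zero, abs_of_nonneg ht.1]
    exact lt_of_le_of_lt ht.2 hbε₁
  have hcont : ContinuousOn φ (Set.Icc 0 b) := fun t ht =>
    ((hmem t ht).continuousAt).continuousWithinAt
  have hderivpos : ∀ t ∈ interior (Set.Icc (0:ℝ) b), 0 < deriv φ t := by
    intro t ht
    rw [interior_Icc] at ht
    rw [(hmem t ⟨le_of_lt ht.1, le_of_lt ht.2⟩).deriv]
    exact hδ ⟨ht.1, lt_trans ht.2 hbδ⟩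
  have hsm := strictMonoOn_of_deriv_pos (convex_Icc 0 b) hcont hderivpos
  have h1 : φ 0 < φ b := hsm (Set.left_mem_Icc.mpr (le_of_lt hbpos))
    (Set.right_mem_Icc.mpr (le_of_lt hbpos)) hbpos
  have h2 : φ b ≤ φ 0 := by
    apply hball₂
    rw [Real.dist_eq, sub_zero, abs_of_nonneg (le_of_lt hbpos)]
    exact hbε₂
  linarith

/-- Setting up the derivatives of `t ↦ u (x₀ + t • v)` for a `C²` function `u`. -/
private lemma dir_core {d : ℕ} {u : EuclideanSpace ℝ (Fin d) → ℝ}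
    {x₀ : EuclideanSpace ℝ (Fin d)} (hu : ContDiffAt ℝ 2 u x₀)
    (v : EuclideanSpace ℝ (Fin d)) :
    (∀ᶠ t in nhds (0:ℝ), HasDerivAt (fun s => u (x₀ + s • v))
        (fderiv ℝ u (x₀ + t • v) v) t) ∧
    HasDerivAt (fun t : ℝ => fderiv ℝ u (x₀ + t • v) v)
      (fderiv ℝ (fun y => fderiv ℝ u y v) x₀ v) 0 := by
  have hAder : ∀ t : ℝ, HasDerivAt (fun s : ℝ => x₀ + s • v) v t := by
    intro t
    simpa using ((hasDerivAt_id t).smul_const v).const_add x₀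
  have hA0 : x₀ = x₀ + (0:ℝ) • v := by simp
  have hAtendsto : Filter.Tendsto (fun s : ℝ => x₀ + s • v) (nhds 0) (nhds x₀) := by
    have h := (hAder 0).continuousAt.tendsto
    rwa [← hA0] at h
  constructor
  · have h1 : ∀ᶠ y in nhds x₀, DifferentiableAt ℝ u y :=
      (hu.eventually (by simp)).mono fun y hy => hy.differentiableAt (by norm_num)
    filter_upwards [hAtendsto.eventually h1] with t ht
    exact ht.hasFDerivAt.comp_hasDerivAt t (hAder t)
  · have h2 : ContDiffAt ℝ 1 (fderiv ℝ u) x₀ := hu.fderiv_right (by norm_num)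
    have hg : DifferentiableAt ℝ (fun y => fderiv ℝ u y v) x₀ :=
      (h2.clm_apply contDiffAt_const).differentiableAt (by norm_num)
    simpa [Function.comp_def] using hg.hasFDerivAt.comp_hasDerivAt_of_eq 0 (hAder 0) hA0

/-- At an interior local max of a `C²` function, second directional derivatives
are nonpositive. -/
private lemma dir_second_nonpos {d : ℕ} {u : EuclideanSpace ℝ (Fin d) → ℝ}
    {x₀ : EuclideanSpace ℝ (Fin d)} (hu : ContDiffAt ℝ 2 u x₀)
    (hmax : IsLocalMax u x₀) (v : EuclideanSpace ℝ (Fin d)) :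
    fderiv ℝ (fun y => fderiv ℝ u y v) x₀ v ≤ 0 := by
  obtain ⟨h1, h2⟩ := dir_core hu v
  have hAtendsto : Filter.Tendsto (fun s : ℝ => x₀ + s • v) (nhds 0) (nhds x₀) := by
    have h := (by simpa using ((hasDerivAt_id (0:ℝ)).smul_const v).const_add x₀ :
      HasDerivAt (fun s : ℝ => x₀ + s • v) v 0).continuousAt.tendsto
    simpa using h
  have hmaxφ : IsLocalMax (fun s : ℝ => u (x₀ + s • v)) 0 := by
    have := hAtendsto.eventually hmax
    filter_upwards [this] with t ht
    simpa using ht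
  exact second_deriv_nonpos hmaxφ h1 h2

/-- At an interior local min of a `C²` function, second directional derivatives
are nonnegative. -/
private lemma dir_second_nonneg {d : ℕ} {u : EuclideanSpace ℝ (Fin d) → ℝ}
    {x₀ : EuclideanSpace ℝ (Fin d)} (hu : ContDiffAt ℝ 2 u x₀)
    (hmin : IsLocalMin u x₀) (v : EuclideanSpace ℝ (Fin d)) :
    0 ≤ fderiv ℝ (fun y => fderiv ℝ u y v) x₀ v := by
  obtain ⟨h1, h2⟩ := dir_core hu v
  have hAtendsto : Filter.Tendsto (fun s : ℝ => x₀ + s • v) (nhds 0) (nhds x₀) := by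
    have h := (by simpa using ((hasDerivAt_id (0:ℝ)).smul_const v).const_add x₀ :
      HasDerivAt (fun s : ℝ => x₀ + s • v) v 0).continuousAt.tendsto
    simpa using h
  have hminφ : IsLocalMin (fun s : ℝ => u (x₀ + s • v)) 0 := by
    have := hAtendsto.eventually hmin
    filter_upwards [this] with t ht
    simpa using ht
  have hmaxneg : IsLocalMax (fun s : ℝ => -u (x₀ + s • v)) 0 := hminφ.neg
  have h1' : ∀ᶠ t in nhds (0:ℝ), HasDerivAt (fun s : ℝ => -u (x₀ + s • v))
      (-(fderiv ℝ u (x₀ + t • v) v)) t := h1.mono fun t ht => ht.neg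
  have := second_deriv_nonpos hmaxneg h1' h2.neg
  linarith

/-- Every Dirichlet eigenvalue of a bounded open set is nonnegative
(maximum principle). -/
private lemma eigen_nonneg {d : ℕ} {A : Set (EuclideanSpace ℝ (Fin d))}
    (hAo : IsOpen A) (hAb : Bornology.IsBounded A) {μ : ℝ}
    (h : IsDirichletEigenvalue A μ) : 0 ≤ μ := by
  by_contra hμ
  push_neg at hμ
  obtain ⟨u, hC2, hCont, hBdry, hEq, hNz⟩ := h
  push_neg at hNz
  obtain ⟨x, hxA, hux⟩ := hNz
  have hclos : IsCompact (closure A) :=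
    Metric.isCompact_of_isClosed_isBounded isClosed_closure hAb.closure
  have hne : (closure A).Nonempty := ⟨x, subset_closure hxA⟩
  obtain ⟨z, hzc, hzmax⟩ := hclos.exists_isMaxOn hne
    (continuous_abs.comp_continuousOn hCont)
  have hz0 : u z ≠ 0 := by
    intro h0
    have h1 : |u x| ≤ |u z| := hzmax (subset_closure hxA)
    rw [h0] at h1
    simp only [abs_zero, abs_nonpos_iff] at h1
    exact hux h1
  have hzA : z ∈ A := by
    by_contra hzn
    refine hz0 (hBdry z ?_)
    rw [frontier, hAo.interior_eq]
    exact ⟨hzc, hzn⟩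
  have hC2z : ContDiffAt ℝ 2 u z := hC2.contDiffAt (hAo.mem_nhds hzA)
  have hlap : lap u z = -(μ * u z) := by
    have := hEq z hzA; linarith
  rcases lt_or_gt_of_ne hz0 with hneg | hpos
  · -- u z < 0 : z is a local minimum
    have hmin : IsLocalMin u z := by
      filter_upwards [hAo.mem_nhds hzA] with y hy
      have h1 : |u y| ≤ |u z| := hzmax (subset_closure hy)
      have h2 : |u z| = -u z := abs_of_neg hneg
      have h3 : -u y ≤ |u y| := neg_le_abs _
      linarith
    have hterm : 0 ≤ lap u z := by
      apply Finset.sum_nonneg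
      intro i _
      exact dir_second_nonneg hC2z hmin _
    rw [hlap] at hterm
    nlinarith
  · -- u z > 0 : z is a local maximum
    have hmax : IsLocalMax u z := by
      filter_upwards [hAo.mem_nhds hzA] with y hy
      have h1 : |u y| ≤ |u z| := hzmax (subset_closure hy)
      have h2 : |u z| = u z := abs_of_pos hpos
      have h3 : u y ≤ |u y| := le_abs_self _
      linarith
    have hterm : lap u z ≤ 0 := by
      apply Finset.sum_nonpos
      intro i _
      exact dir_second_nonpos hC2z hmax _
    rw [hlap] at hterm
    nlinarith

/-- `λ₁` (real version) is nonnegative for bounded open sets. -/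
private lemma lam1r_nonneg {d : ℕ} {A : Set (EuclideanSpace ℝ (Fin d))}
    (hAo : IsOpen A) (hAb : Bornology.IsBounded A) : 0 ≤ lam1r A :=
  Real.sInf_nonneg fun _ hμ => eigen_nonneg hAo hAb hμ

/-- The constant value of the energies of a spectral equipartition. -/
private lemma energyP_const {d k : ℕ} {D : Fin k → Set (EuclideanSpace ℝ (Fin d))}
    {c q : ℝ} (hk : 1 ≤ k) (hc : 0 ≤ c) (hq : 1 ≤ q)
    (hval : ∀ i, lam1r (D i) = c) : energyP D q = c := by
  have hkpos : (0:ℝ) < k := by exact_mod_cast hk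
  have hq0 : q ≠ 0 := by positivity
  have hsum : ∑ i : Fin k, lam1r (D i) ^ q = (k : ℝ) * c ^ q := by
    simp [hval, Finset.sum_const, mul_comm]
  rw [energyP, hsum]
  rw [show (1 / (k:ℝ)) * ((k:ℝ) * c ^ q) = c ^ q by field_simp]
  rw [← Real.rpow_mul hc, mul_one_div_cancel hq0, Real.rpow_one]

/-- Monotonicity of the `p`-means in `p` for nonnegative values. -/
private lemma pmean_mono {k : ℕ} (hk : 1 ≤ k) {a : Fin k → ℝ}
    (ha : ∀ i, 0 ≤ a i) {p q : ℝ} (hp : 1 ≤ p) (hpq : p ≤ q) :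
    ((1 / (k:ℝ)) * ∑ i, a i ^ p) ^ (1 / p) ≤
      ((1 / (k:ℝ)) * ∑ i, a i ^ q) ^ (1 / q) := by
  have hkpos : (0:ℝ) < k := by exact_mod_cast hk
  have hppos : (0:ℝ) < p := by linarith
  have hqpos : (0:ℝ) < q := by linarith
  have hr : 1 ≤ q / p := (one_le_div hppos).mpr hpq
  have hX : 0 ≤ (1 / (k:ℝ)) * ∑ i, a i ^ p := by
    apply mul_nonneg (by positivity)
    exact Finset.sum_nonneg fun i _ => Real.rpow_nonneg (ha i) p
  have key := Real.rpow_arith_mean_le_arith_mean_rpow Finset.univ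
    (fun _ : Fin k => 1 / (k:ℝ)) (fun i => a i ^ p)
    (fun i _ => by positivity)
    (by simp [Finset.sum_const]; field_simp)
    (fun i _ => Real.rpow_nonneg (ha i) p) hr
  simp only [← Finset.mul_sum] at key
  have hsum2 : ∑ i : Fin k, (a i ^ p) ^ (q / p) = ∑ i, a i ^ q :=
    Finset.sum_congr rfl fun i _ => by
      rw [← Real.rpow_mul (ha i), show p * (q / p) = q by field_simp]
  rw [hsum2] at key
  have hmono := Real.rpow_le_rpow (Real.rpow_nonneg hX (q / p)) key
    (le_of_lt (one_div_pos.mpr hqpos))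
  rw [← Real.rpow_mul hX] at hmono
  have : q / p * (1 / q) = 1 / p := by field_simp
  rwa [this] at hmono

/-- If a `p`-minimal `k`-partition `D` of `Ω` is a spectral
equipartition (all `λ₁(D_i)` are equal), then `D` is `q`-minimal for every
`q ∈ [p, ∞]`. -/
theorem stmt15 (Ω : Set (EuclideanSpace ℝ (Fin 2))) (hΩo : IsOpen Ω)
    (hΩb : Bornology.IsBounded Ω) (k : ℕ) (hk : 1 ≤ k) (p : ℝ) (hp : 1 ≤ p)
    (D : Fin k → Set (EuclideanSpace ℝ (Fin 2))) (hD : IsKPartition Ω D)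
    (hmin : energyP D p = LLkpR Ω k p)
    (hequi : ∀ i j, lam1r (D i) = lam1r (D j)) :
    (∀ q : ℝ, p ≤ q → energyP D q = LLkpR Ω k q) ∧ energyInf D = LLkR Ω k := by
  have hkpos : (0:ℝ) < k := by exact_mod_cast hk
  have i₀ : Fin k := ⟨0, hk⟩
  haveI : Nonempty (Fin k) := ⟨i₀⟩
  set c := lam1r (D i₀) with hcdef
  have hval : ∀ i, lam1r (D i) = c := fun i => hequi i i₀
  have hnn : ∀ (E : Fin k → Set (EuclideanSpace ℝ (Fin 2))), IsKPartition Ω E →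
      ∀ i, 0 ≤ lam1r (E i) := fun E hE i =>
    lam1r_nonneg (hE.1 i) (hΩb.subset (hE.2.2.1 i))
  have hc0 : 0 ≤ c := hnn D hD i₀
  have hnonnegE : ∀ (r : ℝ) (E : Fin k → Set (EuclideanSpace ℝ (Fin 2))),
      IsKPartition Ω E → 0 ≤ energyP E r := by
    intro r E hE
    unfold energyP
    apply Real.rpow_nonneg
    exact mul_nonneg (by positivity)
      (Finset.sum_nonneg fun i _ => Real.rpow_nonneg (hnn E hE i) r)
  have hDp : energyP D p = c := energyP_const hk hc0 hp hval
  have hSp_bdd : BddBelow {e | ∃ E : Fin k → Set (EuclideanSpace ℝ (Fin 2)),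
      IsKPartition Ω E ∧ e = energyP E p} := by
    refine ⟨0, fun e he => ?_⟩
    obtain ⟨E, hE, rfl⟩ := he
    exact hnonnegE p E hE
  have hlbp : ∀ (E : Fin k → Set (EuclideanSpace ℝ (Fin 2))), IsKPartition Ω E →
      c ≤ energyP E p := by
    intro E hE
    rw [← hDp, hmin, LLkpR]
    exact csInf_le hSp_bdd ⟨E, hE, rfl⟩
  constructor
  · intro q hpq
    have hq1 : 1 ≤ q := le_trans hp hpq
    have hDq : energyP D q = c := energyP_const hk hc0 hq1 hval
    have hkey : ∀ (E : Fin k → Set (EuclideanSpace ℝ (Fin 2))), IsKPartition Ω E →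
        c ≤ energyP E q := by
      intro E hE
      refine le_trans (hlbp E hE) ?_
      exact pmean_mono hk (hnn E hE) hp hpq
    have h2 : LLkpR Ω k q = c := by
      rw [LLkpR]
      apply le_antisymm
      · exact le_trans (csInf_le ⟨c, fun e he => by
          obtain ⟨E, hE, rfl⟩ := he; exact hkey E hE⟩ ⟨D, hD, rfl⟩) (le_of_eq hDq)
      · refine le_csInf ⟨energyP D q, D, hD, rfl⟩ ?_
        intro e he
        obtain ⟨E, hE, rfl⟩ := he
        exact hkey E hE
    rw [hDq, h2]
  · have hDinf : energyInf D = c := by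
      rw [energyInf]
      have hfe : (fun i => lam1r (D i)) = fun _ => c := funext hval
      rw [hfe, ciSup_const]
    have hkeyinf : ∀ (E : Fin k → Set (EuclideanSpace ℝ (Fin 2))), IsKPartition Ω E →
        c ≤ energyInf E := by
      intro E hE
      refine le_trans (hlbp E hE) ?_
      set a : Fin k → ℝ := fun i => lam1r (E i) with ha
      set M : ℝ := ⨆ i, a i with hM
      have hMub : ∀ i, a i ≤ M := fun i =>
        le_ciSup (Set.Finite.bddAbove (Set.finite_range a)) i
      have hM0 : 0 ≤ M := le_trans (hnn E hE i₀) (hMub i₀)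
      have hppos : (0:ℝ) < p := by linarith
      have hsum : ∑ i, a i ^ p ≤ (k:ℝ) * M ^ p := by
        calc ∑ i, a i ^ p ≤ ∑ _i : Fin k, M ^ p :=
              Finset.sum_le_sum fun i _ =>
                Real.rpow_le_rpow (hnn E hE i) (hMub i) (le_of_lt hppos)
          _ = (k:ℝ) * M ^ p := by
              rw [Finset.sum_const, Finset.card_univ, Fintype.card_fin, nsmul_eq_mul]
      have hX : (1 / (k:ℝ)) * ∑ i, a i ^ p ≤ M ^ p := by
        have h1 : (1 / (k:ℝ)) * ∑ i, a i ^ p ≤ (1 / (k:ℝ)) * ((k:ℝ) * M ^ p) :=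
          mul_le_mul_of_nonneg_left hsum (by positivity)
        have h2 : (1 / (k:ℝ)) * ((k:ℝ) * M ^ p) = M ^ p := by field_simp
        linarith
      have hXnn : 0 ≤ (1 / (k:ℝ)) * ∑ i, a i ^ p :=
        mul_nonneg (by positivity)
          (Finset.sum_nonneg fun i _ => Real.rpow_nonneg (hnn E hE i) p)
      calc energyP E p = ((1 / (k:ℝ)) * ∑ i, a i ^ p) ^ (1 / p) := rfl
        _ ≤ (M ^ p) ^ (1 / p) := Real.rpow_le_rpow hXnn hX (by positivity)
        _ = M := by
            rw [← Real.rpow_mul hM0, mul_one_div_cancel (ne_of_gt hppos), Real.rpow_one]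
        _ = energyInf E := rfl
    have h2 : LLkR Ω k = c := by
      rw [LLkR]
      apply le_antisymm
      · exact le_trans (csInf_le ⟨c, fun e he => by
          obtain ⟨E, hE, rfl⟩ := he; exact hkeyinf E hE⟩ ⟨D, hD, rfl⟩) (le_of_eq hDinf)
      · refine le_csInf ⟨energyInf D, D, hD, rfl⟩ ?_
        intro e he
        obtain ⟨E, hE, rfl⟩ := he
        exact hkeyinf E hE
    rw [hDinf, h2]

end
end

section
/- Lower bound for the counting function of the rectangle: for R = (0,aπ)×(0,bπ) and λ ≥ 1/a² + 1/b², the number N(λ) of pairs (m,n) of positive integers with m²/a² + n²/b² < λ satisfies N(λ) > (ab π²/(4π))λ − ((a+b)π/π)·√λ + 1, i.e. N(λ) > (|R|/(4π))λ − (|∂R|/(2π))√λ + 1. -/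
open scoped ENNReal
open Filter MeasureTheory Metric Real Set

noncomputable section

lemma quarter_circle : ∫ x in (0:ℝ)..1, Real.sqrt (1 - x^2) = π/4 := by
  have hcont : Continuous fun x : ℝ => Real.sqrt (1 - x^2) := by
    exact Real.continuous_sqrt.comp (by continuity)
  have heven : (∫ x in (-1:ℝ)..0, Real.sqrt (1-x^2)) = ∫ x in (0:ℝ)..1, Real.sqrt (1-x^2) := by
    have := intervalIntegral.integral_comp_neg (a := (0:ℝ)) (b := 1) (fun x => Real.sqrt (1-x^2))
    simp only [neg_sq] at this
    rw [show (-0:ℝ) = 0 by norm_num] at this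
    exact this.symm
  have hadd : (∫ x in (-1:ℝ)..0, Real.sqrt (1-x^2)) + (∫ x in (0:ℝ)..1, Real.sqrt (1-x^2))
      = ∫ x in (-1:ℝ)..1, Real.sqrt (1-x^2) :=
    intervalIntegral.integral_add_adjacent_intervals
      (hcont.intervalIntegrable _ _) (hcont.intervalIntegrable _ _)
  have h2 := integral_sqrt_one_sub_sq
  rw [heven] at hadd
  linarith [hadd, h2]

lemma quarter_circle_r {r : ℝ} (hr : 0 < r) :
    ∫ x in (0:ℝ)..r, Real.sqrt (r^2 - x^2) = π/4 * r^2 := by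
  have key : ∀ x : ℝ, Real.sqrt (r^2 - (x*r)^2) = r * Real.sqrt (1 - x^2) := by
    intro x
    rw [show r^2 - (x*r)^2 = r^2 * (1 - x^2) by ring, Real.sqrt_mul (sq_nonneg r),
      Real.sqrt_sq hr.le]
  have := intervalIntegral.integral_comp_mul_right (a := (0:ℝ)) (b := 1)
    (fun x => Real.sqrt (r^2 - x^2)) hr.ne'
  simp only [key, zero_mul, one_mul, smul_eq_mul] at this
  rw [intervalIntegral.integral_const_mul, quarter_circle] at this
  have : (r * (π/4)) * r = (r⁻¹ * ∫ x in (0:ℝ)..r, Real.sqrt (r^2 - x^2)) * r := by rw [this]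
  field_simp at this
  linarith [this]

/-- **counting lower bound for the rectangle.** For
`λ ≥ 1/a² + 1/b²`, the number of pairs `(m,n)` of positive integers with
`m²/a² + n²/b² < λ` satisfies `N(λ) > (|R|/(4π)) λ − (|∂R|/(2π)) √λ + 1`, i.e.
`N(λ) > (abπ/4) λ − (a+b) √λ + 1`. -/
theorem stmt17 (a b : ℝ) (ha : 0 < a) (hb : 0 < b) (lam : ℝ)
    (hlam : 1 / a ^ 2 + 1 / b ^ 2 ≤ lam) :
    ((({p : ℕ × ℕ | 1 ≤ p.1 ∧ 1 ≤ p.2 ∧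
        (p.1 : ℝ) ^ 2 / a ^ 2 + (p.2 : ℝ) ^ 2 / b ^ 2 < lam}).ncard : ℝ)) >
      a * b * Real.pi / 4 * lam - (a + b) * Real.sqrt lam + 1 := by
  have ha2 : (0:ℝ) < a^2 := by positivity
  have hb2 : (0:ℝ) < b^2 := by positivity
  have hl0 : 0 < lam := lt_of_lt_of_le (by positivity) hlam
  set c : ℝ := a * Real.sqrt lam with hc_def
  have hc0 : 0 < c := by positivity
  have hc2 : c^2 = a^2 * lam := by
    rw [hc_def, mul_pow, Real.sq_sqrt hl0.le]
  have hc1 : 1 ≤ c := by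
    have h1a : (1/a)^2 ≤ lam := by
      rw [div_pow, one_pow]
      have : (0:ℝ) < 1/b^2 := by positivity
      linarith
    have h2 := (Real.le_sqrt (by positivity) hl0.le).mpr h1a
    calc (1:ℝ) = a * (1/a) := by field_simp
    _ ≤ a * Real.sqrt lam := mul_le_mul_of_nonneg_left h2 ha.le
  set g : ℝ → ℝ := fun x => b/a * Real.sqrt (c^2 - x^2) with hg_def
  have hg_cont : Continuous g :=
    continuous_const.mul (Real.continuous_sqrt.comp (by continuity))
  have hg_nonneg : ∀ x, 0 ≤ g x := fun x => by positivity
  have hg_anti : AntitoneOn g (Set.Ici 0) := by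
    intro x hx y hy hxy
    apply mul_le_mul_of_nonneg_left _ (by positivity)
    apply Real.sqrt_le_sqrt
    have hx0 : (0:ℝ) ≤ x := hx
    nlinarith
  set F : ℝ → ℝ := fun x => max (g x - 1) 0 with hF_def
  have hF_cont : Continuous F := (hg_cont.sub continuous_const).max continuous_const
  have hF_nonneg : ∀ x, 0 ≤ F x := fun x => le_max_right _ _
  have hF_anti : AntitoneOn F (Set.Ici 0) := fun x hx y hy hxy =>
    max_le_max (sub_le_sub_right (hg_anti hx hy hxy) 1) le_rfl
  set M : ℕ := ⌈c⌉₊ with hM_def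
  set S : Set (ℕ × ℕ) := {p : ℕ × ℕ | 1 ≤ p.1 ∧ 1 ≤ p.2 ∧
        (p.1 : ℝ) ^ 2 / a ^ 2 + (p.2 : ℝ) ^ 2 / b ^ 2 < lam} with hS_def
  set B : ℕ := ⌈b * Real.sqrt lam⌉₊ with hB_def
  -- membership criterion via g
  have hmem : ∀ m n : ℕ, 1 ≤ n → ((n:ℝ) < g m) →
      ((m:ℝ)^2/a^2 + (n:ℝ)^2/b^2 < lam) := by
    intro m n hn hng
    have h2 : (n:ℝ) * (a / b) < Real.sqrt (c^2 - (m:ℝ)^2) := by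
      have h := mul_lt_mul_of_pos_right hng (show (0:ℝ) < a/b by positivity)
      calc (n:ℝ) * (a/b) < (b/a * Real.sqrt (c^2 - (m:ℝ)^2)) * (a/b) := h
      _ = Real.sqrt (c^2 - (m:ℝ)^2) := by field_simp
    have h3 := (Real.lt_sqrt (by positivity)).mp h2
    have h4 : (n:ℝ)^2 * a^2 < (a^2 * lam - (m:ℝ)^2) * b^2 := by
      have hexp : ((n:ℝ) * (a/b))^2 = (n:ℝ)^2 * a^2 / b^2 := by
        field_simp
      rw [hexp, div_lt_iff₀ hb2] at h3
      rw [← hc2]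
      linarith [h3]
    rw [div_add_div _ _ (ne_of_gt ha2) (ne_of_gt hb2), div_lt_iff₀ (by positivity)]
    nlinarith [h4]
  -- fiberwise count bound
  have hterm : ∀ m : ℕ, F (m:ℝ) ≤ ((⌈g (m:ℝ)⌉₊ - 1 : ℕ) : ℝ) := by
    intro m
    rcases Nat.eq_zero_or_pos ⌈g (m:ℝ)⌉₊ with h0 | h1
    · have hg0 := Nat.ceil_eq_zero.mp h0
      rw [h0]
      simp only [Nat.zero_sub, Nat.cast_zero]
      exact max_le (by linarith) le_rfl
    · rw [Nat.cast_sub h1, Nat.cast_one]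
      have hle := Nat.le_ceil (g (m:ℝ))
      have h1' : (1:ℝ) ≤ (⌈g (m:ℝ)⌉₊ : ℝ) := by exact_mod_cast h1
      exact max_le (by linarith) (by linarith)
  -- the witness finset
  set T : Finset (ℕ × ℕ) := (Finset.range M).biUnion
      (fun i => (Finset.Ico 1 ⌈g ((1+i : ℕ):ℝ)⌉₊).image (fun n => (1+i, n))) with hT_def
  have hTcard : (T.card : ℝ) = ∑ i ∈ Finset.range M, ((⌈g ((1+i:ℕ):ℝ)⌉₊ - 1 : ℕ) : ℝ) := by
    rw [hT_def, Finset.card_biUnion]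
    · push_cast
      apply Finset.sum_congr rfl
      intro i _
      rw [Finset.card_image_of_injective _ (fun x y hxy => by simpa using hxy), Nat.card_Ico]
    · intro i hi j hj hij
      simp only [Finset.disjoint_left, Finset.mem_image, Finset.mem_Ico]
      rintro ⟨p1, p2⟩ ⟨n, hn, hpn⟩ ⟨n', hn', hpn'⟩
      apply hij
      have e1 : 1 + i = p1 := congrArg Prod.fst hpn
      have e2 : 1 + j = p1 := congrArg Prod.fst hpn'
      omega
  have hTS : ↑T ⊆ S := by
    intro p hp
    simp only [hT_def, Finset.coe_biUnion, Set.mem_iUnion, Finset.mem_coe,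
      Finset.mem_image, Finset.mem_Ico, Finset.mem_range] at hp
    obtain ⟨i, hi, n, ⟨hn1, hn2⟩, rfl⟩ := hp
    refine ⟨by omega, hn1, ?_⟩
    exact hmem (1+i) n hn1 (Nat.lt_ceil.mp hn2)
  have hS_fin : S.Finite := by
    apply Set.Finite.subset ((Finset.Icc 1 M ×ˢ Finset.Icc 1 B).finite_toSet)
    rintro ⟨m, n⟩ ⟨h1, h2, h3⟩
    simp only [Finset.coe_product, Set.mem_prod, Finset.mem_coe, Finset.mem_Icc]
    have hnn : (0:ℝ) ≤ (n:ℝ)^2/b^2 := by positivity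
    have hmm : (0:ℝ) ≤ (m:ℝ)^2/a^2 := by positivity
    have hm2 : (m:ℝ)^2/a^2 < lam := by linarith
    have hn2 : (n:ℝ)^2/b^2 < lam := by linarith
    constructor
    · refine ⟨h1, ?_⟩
      have hmc : (m:ℝ) ≤ c := by
        have hsq : (m:ℝ)^2 < c^2 := by
          rw [hc2]; rw [div_lt_iff₀ ha2] at hm2; linarith
        exact (lt_of_pow_lt_pow_left₀ 2 hc0.le hsq).le
      have : (m:ℝ) ≤ (M:ℝ) := hmc.trans (Nat.le_ceil c)
      exact_mod_cast this
    · refine ⟨h2, ?_⟩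
      have hnc : (n:ℝ) ≤ b * Real.sqrt lam := by
        have hbneg : (0:ℝ) < b * Real.sqrt lam := by positivity
        have hsq : (n:ℝ)^2 < (b * Real.sqrt lam)^2 := by
          rw [mul_pow, Real.sq_sqrt hl0.le]
          rw [div_lt_iff₀ hb2] at hn2; linarith
        exact (lt_of_pow_lt_pow_left₀ 2 hbneg.le hsq).le
      have : (n:ℝ) ≤ (B:ℝ) := hnc.trans (Nat.le_ceil _)
      exact_mod_cast this
  have hcard : ∑ i ∈ Finset.range M, F (1 + (i:ℝ)) ≤ (S.ncard : ℝ) := by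
    calc ∑ i ∈ Finset.range M, F (1 + (i:ℝ))
        = ∑ i ∈ Finset.range M, F ((1+i : ℕ):ℝ) := by
          apply Finset.sum_congr rfl; intro i _; push_cast; ring_nf
      _ ≤ ∑ i ∈ Finset.range M, ((⌈g ((1+i:ℕ):ℝ)⌉₊ - 1 : ℕ) : ℝ) :=
          Finset.sum_le_sum (fun i _ => hterm _)
      _ = (T.card : ℝ) := hTcard.symm
      _ = ((↑T : Set (ℕ×ℕ)).ncard : ℝ) := by rw [Set.ncard_coe_finset]
      _ ≤ _ := by exact_mod_cast Set.ncard_le_ncard hTS hS_fin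
  -- integral comparisons
  have hMc : c ≤ 1 + (M:ℝ) := by
    have := Nat.le_ceil c
    rw [← hM_def] at this
    linarith
  have hint1 : (∫ x in (1:ℝ)..(1 + (M:ℕ):ℝ), F x) ≤ ∑ i ∈ Finset.range M, F (1 + (i:ℝ)) := by
    have hsub : Set.Icc (1:ℝ) (1 + (M:ℕ)) ⊆ Set.Ici 0 := fun x hx => le_trans zero_le_one hx.1
    exact AntitoneOn.integral_le_sum (hF_anti.mono hsub)
  have hint2 : (∫ x in (1:ℝ)..c, F x) ≤ ∫ x in (1:ℝ)..(1 + (M:ℕ):ℝ), F x :=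
    intervalIntegral.integral_mono_interval le_rfl hc1 hMc
      (Filter.Eventually.of_forall hF_nonneg) (hF_cont.intervalIntegrable _ _)
  have hint3 : (∫ x in (1:ℝ)..c, (g x - 1)) ≤ ∫ x in (1:ℝ)..c, F x :=
    intervalIntegral.integral_mono_on hc1
      ((hg_cont.sub continuous_const).intervalIntegrable _ _)
      (hF_cont.intervalIntegrable _ _) (fun x _ => le_max_left _ _)
  have hsplit : (∫ x in (1:ℝ)..c, (g x - 1)) = (∫ x in (1:ℝ)..c, g x) - (c - 1) := by
    rw [intervalIntegral.integral_sub (hg_cont.intervalIntegrable _ _)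
      intervalIntegrable_const, intervalIntegral.integral_const, smul_eq_mul, mul_one]
  have hadj : (∫ x in (0:ℝ)..1, g x) + (∫ x in (1:ℝ)..c, g x) = ∫ x in (0:ℝ)..c, g x :=
    intervalIntegral.integral_add_adjacent_intervals
      (hg_cont.intervalIntegrable _ _) (hg_cont.intervalIntegrable _ _)
  have htot : (∫ x in (0:ℝ)..c, g x) = a*b*π/4*lam := by
    rw [hg_def]
    simp only
    rw [intervalIntegral.integral_const_mul, quarter_circle_r hc0, hc2]
    field_simp
  have hg0val : g 0 = b * Real.sqrt lam := by
    rw [hg_def]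
    simp only
    rw [show c^2 - (0:ℝ)^2 = c^2 by ring, Real.sqrt_sq hc0.le, hc_def]
    field_simp
  have hsmall : (∫ x in (0:ℝ)..1, g x) < b * Real.sqrt lam := by
    have hhalf : g (1/2) < g 0 := by
      rw [hg_def]
      simp only
      apply mul_lt_mul_of_pos_left _ (by positivity)
      apply Real.sqrt_lt_sqrt (by nlinarith) (by norm_num)
    have h01 : (∫ x in (0:ℝ)..(1/2), g x) ≤ (1/2) * g 0 := by
      calc (∫ x in (0:ℝ)..(1/2), g x) ≤ ∫ _x in (0:ℝ)..(1/2), g 0 :=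
          intervalIntegral.integral_mono_on (by norm_num)
            (hg_cont.intervalIntegrable _ _) intervalIntegrable_const
            (fun x hx => hg_anti (Set.mem_Ici.mpr le_rfl) (Set.mem_Ici.mpr hx.1) hx.1)
        _ = (1/2) * g 0 := by rw [intervalIntegral.integral_const, smul_eq_mul]; norm_num
    have h12 : (∫ x in (1/2:ℝ)..1, g x) ≤ (1/2) * g (1/2) := by
      calc (∫ x in (1/2:ℝ)..1, g x) ≤ ∫ _x in (1/2:ℝ)..1, g (1/2) :=
          intervalIntegral.integral_mono_on (by norm_num)
            (hg_cont.intervalIntegrable _ _) intervalIntegrable_const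
            (fun x hx => hg_anti (Set.mem_Ici.mpr (by norm_num))
              (Set.mem_Ici.mpr (le_trans (by norm_num) hx.1)) hx.1)
        _ = (1/2) * g (1/2) := by rw [intervalIntegral.integral_const, smul_eq_mul]; norm_num
    have hadd01 : (∫ x in (0:ℝ)..(1/2), g x) + (∫ x in (1/2:ℝ)..1, g x)
        = ∫ x in (0:ℝ)..1, g x :=
      intervalIntegral.integral_add_adjacent_intervals
        (hg_cont.intervalIntegrable _ _) (hg_cont.intervalIntegrable _ _)
    rw [← hg0val]
    linarith
  have hfin : a*b*π/4*lam - (a+b)*Real.sqrt lam + 1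
      = (a*b*π/4*lam) - b*Real.sqrt lam - c + 1 := by rw [hc_def]; ring
  rw [hfin]
  linarith [hcard, hint1, hint2, hint3, hsplit, hadj, htot, hsmall]

end
end
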